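/- Every zag sequence of length n is the right depth sequence of exactly one bracketing of size n; consequently, the number of zag sequences of length n equals the Catalan number C_{n−1}. (Claim proved at the end of the paper's Section 2.) -/

import Mathlib

/-- A bracketing of size `n`: a full binary tree with `n` leaves. -/
inductive Bracketing : ℕ → Type
  | leaf : Bracketing 1
  | node : {k l : ℕ} → Bracketing k → Bracketing l → Bracketing (k + l)

/-- The `n`-ary regular operation induced by a bracketing on a magma `(G, op)`. -/
def Bracketing.eval {G : Type*} (op : G → G → G) : {n : ℕ} → Bracketing n → (Fin n → G) → G
  | _, .leaf, v => v 0
  | _, .node P Q, v =>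
      op (Bracketing.eval op P (fun i => v (Fin.castAdd _ i)))
         (Bracketing.eval op Q (fun i => v (Fin.natAdd _ i)))

/-- The associative spectrum: the number of distinct `n`-ary regular operations. -/
noncomputable def assocSpectrum {G : Type*} (op : G → G → G) (n : ℕ) : ℕ :=
  Nat.card {f : (Fin n → G) → G // ∃ B : Bracketing n, f = Bracketing.eval op B}

/-- The depth of the `i`-th leaf of a bracketing. -/
def Bracketing.depth : {n : ℕ} → Bracketing n → Fin n → ℕ
  | _, .leaf, _ => 0
  | _, .node (k := k) P Q, i =>
      if h : (i : ℕ) < k then Bracketing.depth P ⟨i, h⟩ + 1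
      else Bracketing.depth Q ⟨(i : ℕ) - k, by have := i.isLt; omega⟩ + 1

/-- The right depth of the `i`-th leaf of a bracketing. -/
def Bracketing.rdepth : {n : ℕ} → Bracketing n → Fin n → ℕ
  | _, .leaf, _ => 0
  | _, .node (k := k) P Q, i =>
      if h : (i : ℕ) < k then Bracketing.rdepth P ⟨i, h⟩
      else Bracketing.rdepth Q ⟨(i : ℕ) - k, by have := i.isLt; omega⟩ + 1

/-- The left depth of the `i`-th leaf of a bracketing. -/
def Bracketing.ldepth : {n : ℕ} → Bracketing n → Fin n → ℕ
  | _, .leaf, _ => 0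
  | _, .node (k := k) P Q, i =>
      if h : (i : ℕ) < k then Bracketing.ldepth P ⟨i, h⟩ + 1
      else Bracketing.ldepth Q ⟨(i : ℕ) - k, by have := i.isLt; omega⟩

/-- A magma operation is Catalan if distinct bracketings of equal size
    induce distinct regular operations. -/
def IsCatalanOp {G : Type*} (op : G → G → G) : Prop :=
  ∀ (n : ℕ) (B₁ B₂ : Bracketing n), B₁ ≠ B₂ →
    Bracketing.eval op B₁ ≠ Bracketing.eval op B₂

/-- A zag sequence: `d₁ = 0`, `d₂ = 1` (when `n ≥ 2`), and `1 ≤ d_{i+1} ≤ d_i + 1`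
(0-indexed here). -/
def IsZagSeq {n : ℕ} (d : Fin n → ℕ) : Prop :=
  (∀ h : 0 < n, d ⟨0, h⟩ = 0) ∧
  (∀ h : 1 < n, d ⟨1, h⟩ = 1) ∧
  (∀ i : ℕ, ∀ h : i + 1 < n, 1 ≤ d ⟨i + 1, h⟩ ∧ d ⟨i + 1, h⟩ ≤ d ⟨i, by omega⟩ + 1)

-- auxiliary defs
lemma Bracketing.one_le : ∀ {n : ℕ}, Bracketing n → 1 ≤ n
  | _, .leaf => le_refl 1
  | _, .node P Q => le_trans P.one_le (Nat.le_add_right _ _)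

def bcast {m n : ℕ} (h : m = n) (B : Bracketing m) : Bracketing n := h ▸ B

def dext {n : ℕ} (d : Fin n → ℕ) (i : ℕ) : ℕ := if h : i < n then d ⟨i, h⟩ else 0

lemma dext_eq {n : ℕ} (d : Fin n → ℕ) (i : ℕ) (h : i < n) : d ⟨i, h⟩ = dext d i := by
  unfold dext; rw [dif_pos h]

lemma dext_oob {n : ℕ} (d : Fin n → ℕ) (i : ℕ) (h : ¬ i < n) : dext d i = 0 := by
  unfold dext; rw [dif_neg h]

lemma dext_leaf (i : ℕ) : dext (Bracketing.leaf).rdepth i = 0 := by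
  unfold dext
  split
  · simp [Bracketing.rdepth]
  · rfl

lemma dext_node {k l : ℕ} (P : Bracketing k) (Q : Bracketing l) (i : ℕ) :
    dext (P.node Q).rdepth i =
      if i < k then dext P.rdepth i
      else if i < k + l then dext Q.rdepth (i - k) + 1 else 0 := by
  unfold dext
  by_cases h1 : i < k
  · rw [if_pos h1, dif_pos (by omega : i < k + l), dif_pos h1]
    simp only [Bracketing.rdepth]
    rw [dif_pos h1]
  · rw [if_neg h1]
    by_cases h2 : i < k + l
    · rw [if_pos h2, dif_pos h2, dif_pos (by omega : i - k < l)]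
      simp only [Bracketing.rdepth]
      rw [dif_neg h1]
    · rw [if_neg h2, dif_neg h2]

lemma isZagSeq_iff {n : ℕ} (d : Fin n → ℕ) :
    IsZagSeq d ↔ ((0 < n → dext d 0 = 0) ∧ (1 < n → dext d 1 = 1) ∧
      ∀ i : ℕ, i + 1 < n → 1 ≤ dext d (i + 1) ∧ dext d (i + 1) ≤ dext d i + 1) := by
  unfold IsZagSeq
  constructor
  · rintro ⟨h0, h1, hs⟩
    refine ⟨fun h => ?_, fun h => ?_, fun i h => ?_⟩
    · rw [← dext_eq d 0 h]; exact h0 h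
    · rw [← dext_eq d 1 h]; exact h1 h
    · rw [← dext_eq d (i+1) h, ← dext_eq d i (by omega)]; exact hs i h
  · rintro ⟨h0, h1, hs⟩
    refine ⟨fun h => ?_, fun h => ?_, fun i h => ?_⟩
    · rw [dext_eq d 0 h]; exact h0 h
    · rw [dext_eq d 1 h]; exact h1 h
    · rw [dext_eq d (i+1) h, dext_eq d i (by omega)]; exact hs i h

lemma IsZagSeq.dext_pos {n : ℕ} {d : Fin n → ℕ} (hd : IsZagSeq d) (i : ℕ)
    (h0 : 0 < i) (hi : i < n) : 1 ≤ dext d i := by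
  obtain ⟨j, rfl⟩ : ∃ j, i = j + 1 := ⟨i - 1, by omega⟩
  exact (((isZagSeq_iff d).1 hd).2.2 j hi).1

lemma rdepth_zag : ∀ {n : ℕ} (B : Bracketing n), IsZagSeq B.rdepth := by
  intro n B
  induction B with
  | leaf =>
    refine ⟨fun h => rfl, fun h => by omega, fun i h => by omega⟩
  | @node k l P Q ihP ihQ =>
    have hk := P.one_le
    have hl := Q.one_le
    rw [isZagSeq_iff] at ihP ihQ ⊢
    obtain ⟨p0, p1, ps⟩ := ihP
    obtain ⟨q0, q1, qs⟩ := ihQ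
    have hq0 : dext Q.rdepth 0 = 0 := q0 (by omega)
    refine ⟨fun h => ?_, fun h => ?_, fun i h => ?_⟩
    · rw [dext_node, if_pos (by omega)]; exact p0 (by omega)
    · rw [dext_node]
      by_cases h1 : 1 < k
      · rw [if_pos h1]; exact p1 h1
      · rw [if_neg h1, if_pos (by omega : 1 < k + l)]
        have h0 : 1 - k = 0 := by omega
        rw [h0, hq0]
    · constructor
      · rw [dext_node]
        by_cases h1 : i + 1 < k
        · rw [if_pos h1]; exact (ps i h1).1
        · rw [if_neg h1, if_pos (by omega : i + 1 < k + l)]; omega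
      · rw [dext_node, dext_node]
        by_cases hc1 : i + 1 < k
        · rw [if_pos hc1, if_pos (by omega : i < k)]
          exact (ps i hc1).2
        · rw [if_neg hc1, if_pos (by omega : i + 1 < k + l)]
          by_cases hc2 : i < k
          · rw [if_pos hc2]
            have h0 : i + 1 - k = 0 := by omega
            rw [h0, hq0]; omega
          · rw [if_neg hc2, if_pos (by omega : i < k + l)]
            have h1 : i + 1 - k = (i - k) + 1 := by omega
            rw [h1]
            have := (qs (i - k) (by omega)).2
            omega

lemma dext_bcast {m n : ℕ} (h : m = n) (B : Bracketing m) (i : ℕ) :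
    dext (bcast h B).rdepth i = dext B.rdepth i := by subst h; rfl

lemma rdepth_heq_inj : ∀ {m n : ℕ} (B₁ : Bracketing m) (B₂ : Bracketing n), m = n →
    (∀ i, dext B₁.rdepth i = dext B₂.rdepth i) → HEq B₁ B₂ := by
  intro m n B₁
  induction B₁ generalizing n with
  | leaf =>
    intro B₂ h hd
    cases B₂ with
    | leaf => exact HEq.rfl
    | node P Q =>
      exact absurd h (by have := P.one_le; have := Q.one_le; omega)
  | @node k₁ l₁ P₁ Q₁ ihP ihQ =>
    intro B₂ h hd
    cases B₂ with
    | leaf => exact absurd h (by have := P₁.one_le; have := Q₁.one_le; omega)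
    | @node k₂ l₂ P₂ Q₂ =>
      have hp1 := P₁.one_le; have hq1 := Q₁.one_le
      have hp2 := P₂.one_le; have hq2 := Q₂.one_le
      have zQ₁0 : dext Q₁.rdepth 0 = 0 := ((isZagSeq_iff _).1 (rdepth_zag Q₁)).1 (by omega)
      have zQ₂0 : dext Q₂.rdepth 0 = 0 := ((isZagSeq_iff _).1 (rdepth_zag Q₂)).1 (by omega)
      have hk : k₁ = k₂ := by
        by_contra hne
        rcases lt_or_gt_of_ne hne with hlt | hgt
        · have e := hd k₂
          rw [dext_node, dext_node, if_neg (by omega), if_pos (by omega),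
              if_neg (by omega : ¬ k₂ < k₂), if_pos (by omega)] at e
          rw [show k₂ - k₂ = 0 from by omega, zQ₂0] at e
          have := (rdepth_zag Q₁).dext_pos (k₂ - k₁) (by omega) (by omega)
          omega
        · have e := hd k₁
          rw [dext_node, dext_node, if_neg (by omega : ¬ k₁ < k₁), if_pos (by omega),
              if_neg (by omega), if_pos (by omega)] at e
          rw [show k₁ - k₁ = 0 from by omega, zQ₁0] at e
          have := (rdepth_zag Q₂).dext_pos (k₁ - k₂) (by omega) (by omega)
          omega
      subst hk
      have hl : l₁ = l₂ := by omega
      subst hl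
      have hdp : ∀ i, dext P₁.rdepth i = dext P₂.rdepth i := by
        intro i
        by_cases hik : i < k₁
        · have e := hd i
          rw [dext_node, dext_node, if_pos hik, if_pos hik] at e
          exact e
        · rw [dext_oob _ i hik, dext_oob _ i hik]
      have hdq : ∀ i, dext Q₁.rdepth i = dext Q₂.rdepth i := by
        intro i
        by_cases hil : i < l₁
        · have e := hd (k₁ + i)
          rw [dext_node, dext_node, if_neg (by omega), if_pos (by omega),
              if_neg (by omega), if_pos (by omega), show k₁ + i - k₁ = i from by omega] at e
          omega
        · rw [dext_oob _ i hil, dext_oob _ i hil]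
      rw [eq_of_heq (ihP P₂ rfl hdp), eq_of_heq (ihQ Q₂ rfl hdq)]

lemma exists_rdepth : ∀ (n : ℕ), 1 ≤ n → ∀ d : Fin n → ℕ, IsZagSeq d →
    ∃ B : Bracketing n, ∀ i, dext B.rdepth i = dext d i := by
  intro n
  induction n using Nat.strong_induction_on with
  | _ n ih =>
    intro hn d hd
    rcases eq_or_lt_of_le hn with h1 | h1
    · obtain rfl : n = 1 := h1.symm
      refine ⟨.leaf, fun i => ?_⟩
      rw [dext_leaf]
      by_cases h : i < 1
      · obtain rfl : i = 0 := by omega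
        rw [← dext_eq d 0 h]
        exact (hd.1 h).symm
      · rw [dext_oob d i h]
    · obtain ⟨hz0, hz1, hzs⟩ := (isZagSeq_iff d).1 hd
      set k := Nat.findGreatest (fun i => dext d i = 1) (n - 1) with hkdef
      have hd1 : dext d 1 = 1 := hz1 h1
      have hk1 : 1 ≤ k := Nat.le_findGreatest (by omega) hd1
      have hkn : k ≤ n - 1 := Nat.findGreatest_le _
      have hdk : dext d k = 1 := Nat.findGreatest_spec (P := fun i => dext d i = 1) (m := 1) (by omega) hd1
      have hbig : ∀ j, k < j → j < n → 2 ≤ dext d j := by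
        intro j hj hjn
        have hne := Nat.findGreatest_is_greatest (k := j) hj (by omega)
        have := hd.dext_pos j (by omega) hjn
        omega
      set d' : Fin k → ℕ := fun i => d ⟨i, by have := i.isLt; omega⟩ with hd'def
      set d'' : Fin (n - k) → ℕ := fun i => d ⟨k + i, by have := i.isLt; omega⟩ - 1 with hd''def
      have hd'e : ∀ i, i < k → dext d' i = dext d i := by
        intro i h
        unfold dext
        rw [dif_pos h, dif_pos (show i < n by omega)]
      have hd''e : ∀ i, i < n - k → dext d'' i = dext d (k + i) - 1 := by
        intro i h
        unfold dext
        rw [dif_pos h, dif_pos (show k + i < n by omega)]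
      have hz' : IsZagSeq d' := by
        refine (isZagSeq_iff d').2 ⟨fun h => ?_, fun h => ?_, fun i h => ?_⟩
        · rw [hd'e 0 h]; exact hz0 (by omega)
        · rw [hd'e 1 h]; exact hz1 (by omega)
        · rw [hd'e (i+1) h, hd'e i (by omega)]; exact hzs i (by omega)
      have hz'' : IsZagSeq d'' := by
        refine (isZagSeq_iff d'').2 ⟨fun h => ?_, fun h => ?_, fun i h => ?_⟩
        · rw [hd''e 0 h, Nat.add_zero, hdk]
        · rw [hd''e 1 h]
          have h2 : 2 ≤ dext d (k + 1) := hbig (k+1) (by omega) (by omega)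
          have h3 := (hzs k (by omega)).2
          omega
        · rw [hd''e (i+1) h, hd''e i (by omega),
              show k + (i + 1) = k + i + 1 from by omega]
          have h2 : 2 ≤ dext d (k + i + 1) := hbig _ (by omega) (by omega)
          have h3 := (hzs (k + i) (by omega)).2
          have h4 : 1 ≤ dext d (k + i) := hd.dext_pos _ (by omega) (by omega)
          omega
      obtain ⟨P, hP⟩ := ih k (by omega) (by omega) d' hz'
      obtain ⟨Q, hQ⟩ := ih (n - k) (by omega) (by omega) d'' hz''
      refine ⟨bcast (by omega : k + (n - k) = n) (P.node Q), fun i => ?_⟩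
      rw [dext_bcast, dext_node]
      by_cases hik : i < k
      · rw [if_pos hik, hP i, hd'e i hik]
      · by_cases hin : i < n
        · rw [if_neg hik, if_pos (by omega), hQ (i - k), hd''e (i-k) (by omega),
              show k + (i - k) = i from by omega]
          have hge1 : 1 ≤ dext d i := hd.dext_pos i (by omega) hin
          omega
        · rw [if_neg hik, if_neg (by omega), dext_oob d i hin]

def toTree : ∀ {n : ℕ}, Bracketing n → BinaryTree Unit
  | _, .leaf => .nil
  | _, .node P Q => .node () (toTree P) (toTree Q)

lemma numNodes_toTree : ∀ {n : ℕ} (B : Bracketing n), (toTree B).numNodes + 1 = n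
  | _, .leaf => rfl
  | _, .node P Q => by
      have hP := numNodes_toTree P
      have hQ := numNodes_toTree Q
      simp only [toTree, BinaryTree.numNodes]
      omega

def fromTree : (t : BinaryTree Unit) → Bracketing (t.numNodes + 1)
  | .nil => .leaf
  | .node _ l r =>
      bcast (by simp only [BinaryTree.numNodes]; omega) ((fromTree l).node (fromTree r))

lemma toTree_bcast {m n : ℕ} (h : m = n) (B : Bracketing m) :
    toTree (bcast h B) = toTree B := by subst h; rfl

lemma toTree_fromTree : ∀ t : BinaryTree Unit, toTree (fromTree t) = t
  | .nil => rfl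
  | .node a l r => by
      cases a
      simp only [fromTree, toTree_bcast, toTree, toTree_fromTree l, toTree_fromTree r]

lemma toTree_inj : ∀ {m n : ℕ} (B₁ : Bracketing m) (B₂ : Bracketing n),
    toTree B₁ = toTree B₂ → HEq B₁ B₂ := by
  intro m n B₁
  induction B₁ generalizing n with
  | leaf =>
    intro B₂ h
    cases B₂ with
    | leaf => exact HEq.rfl
    | node P Q => exact absurd h (by simp [toTree])
  | @node k₁ l₁ P₁ Q₁ ihP ihQ =>
    intro B₂ h
    cases B₂ with
    | leaf => exact absurd h (by simp [toTree])
    | @node k₂ l₂ P₂ Q₂ =>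
      simp only [toTree, BinaryTree.node.injEq] at h
      obtain ⟨-, hP, hQ⟩ := h
      have hk : k₁ = k₂ := by
        have h1 := numNodes_toTree P₁
        have h2 := numNodes_toTree P₂
        rw [hP] at h1
        omega
      have hl : l₁ = l₂ := by
        have h1 := numNodes_toTree Q₁
        have h2 := numNodes_toTree Q₂
        rw [hQ] at h1
        omega
      subst hk; subst hl
      rw [eq_of_heq (ihP P₂ hP), eq_of_heq (ihQ Q₂ hQ)]


/-- End of paper's Section 2: every zag sequence of length `n` is the right depth sequence
of exactly one bracketing of size `n`; consequently the number of zag sequences of length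
`n` equals the Catalan number `C_{n-1}`. -/
theorem stmt6 (n : ℕ) (hn : 1 ≤ n) :
    (∀ d : Fin n → ℕ, IsZagSeq d → ∃! B : Bracketing n, B.rdepth = d) ∧
    Nat.card {d : Fin n → ℕ // IsZagSeq d} = catalan (n - 1) := by
  have huniq : ∀ d : Fin n → ℕ, IsZagSeq d → ∃! B : Bracketing n, B.rdepth = d := by
    intro d hd
    obtain ⟨B, hB⟩ := exists_rdepth n hn d hd
    refine ⟨B, ?_, ?_⟩
    · funext i
      exact (dext_eq B.rdepth i.1 i.isLt).trans ((hB i.1).trans (dext_eq d i.1 i.isLt).symm)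
    · intro B' hB'
      refine eq_of_heq (rdepth_heq_inj B' B rfl fun i => ?_)
      rw [hB i]
      subst hB'
      rfl
  refine ⟨huniq, ?_⟩
  have h1 : Nat.card (Bracketing n) = Nat.card {d : Fin n → ℕ // IsZagSeq d} := by
    refine Nat.card_eq_of_bijective (fun B => ⟨B.rdepth, rdepth_zag B⟩) ⟨?_, ?_⟩
    · intro B₁ B₂ h
      have h' : B₁.rdepth = B₂.rdepth := congrArg Subtype.val h
      exact eq_of_heq (rdepth_heq_inj B₁ B₂ rfl fun i => by rw [h'])
    · rintro ⟨d, hd⟩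
      obtain ⟨B, hB, -⟩ := huniq d hd
      exact ⟨B, by simp [hB]⟩
  have h2 : Nat.card (Bracketing n) = Nat.card {t : BinaryTree Unit // t.numNodes = n - 1} := by
    refine Nat.card_eq_of_bijective
      (fun B => ⟨toTree B, by have := numNodes_toTree B; omega⟩) ⟨?_, ?_⟩
    · intro B₁ B₂ h
      have h' : toTree B₁ = toTree B₂ := congrArg Subtype.val h
      exact eq_of_heq (toTree_inj B₁ B₂ h')
    · rintro ⟨t, ht⟩
      refine ⟨bcast (by omega : t.numNodes + 1 = n) (fromTree t), ?_⟩
      simp only [toTree_bcast, toTree_fromTree]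
  have h3 : Nat.card {t : BinaryTree Unit // t.numNodes = n - 1} = catalan (n - 1) := by
    rw [← BinaryTree.treesOfNumNodesEq_card_eq_catalan, ← Nat.card_eq_finsetCard]
    exact Nat.card_congr (Equiv.subtypeEquivRight fun t => BinaryTree.mem_treesOfNumNodesEq.symm)
  rw [← h1, h2, h3]
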